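/- arXiv:1507.00600 — 2 statements merged into one kernel-verified Lean document; each statement's English description precedes it below -/
import Mathlib

section
/- Let τ be a smooth binary relation on words over an alphabet Σ and fix a language M. Then for every language X: ind(X) = σ_X^*(μ(X)) and μ(X) ∩ σ_X^+(μ(X)) = ∅. -/
open Set

/-- Image of a language under a binary word relation: τ(X) = {y | ∃ x ∈ X, τ(x,y)}. -/
def img {α : Type*} (τ : List α → List α → Prop) (X : Set (List α)) : Set (List α) :=
  {y | ∃ x ∈ X, τ x y}

/-- Inverse image: τ⁻¹(X) = {y | ∃ x ∈ X, τ(y,x)}. -/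
def pre {α : Type*} (τ : List α → List α → Prop) (X : Set (List α)) : Set (List α) :=
  {y | ∃ x ∈ X, τ y x}

/-- ind(X) = M \ (τ(X) ∪ τ⁻¹(X)). -/
def ind {α : Type*} (τ : List α → List α → Prop) (M X : Set (List α)) : Set (List α) :=
  M \ (img τ X ∪ pre τ X)

/-- The max-min operator μ(X) = ind(X) \ τ⁻¹(ind(X)). -/
def mu {α : Type*} (τ : List α → List α → Prop) (M X : Set (List α)) : Set (List α) :=
  ind τ M X \ pre τ (ind τ M X)

/-- σ_X(A) = τ⁻¹(A) ∩ ind(X). -/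
def sig {α : Type*} (τ : List α → List α → Prop) (M X A : Set (List α)) : Set (List α) :=
  pre τ A ∩ ind τ M X

/-- Φ^*(A) = ⋃_{i≥0} Φ^i(A). -/
def opStar {α : Type*} (Φ : Set (List α) → Set (List α)) (A : Set (List α)) : Set (List α) :=
  ⋃ i : ℕ, Φ^[i] A

/-- Φ^+(A) = ⋃_{i≥1} Φ^i(A). -/
def opPlus {α : Type*} (Φ : Set (List α) → Set (List α)) (A : Set (List α)) : Set (List α) :=
  ⋃ i ≥ 1, Φ^[i] A

/-- Φ^∩(A) = ⋂_{i≥1} Φ^i(A). -/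
def opInter {α : Type*} (Φ : Set (List α) → Set (List α)) (A : Set (List α)) : Set (List α) :=
  ⋂ i ≥ 1, Φ^[i] A

/-- Φ^{≥k}(A) = ⋃_{i≥k} Φ^i(A). -/
def opGe {α : Type*} (Φ : Set (List α) → Set (List α)) (k : ℕ) (A : Set (List α)) : Set (List α) :=
  ⋃ i ≥ k, Φ^[i] A

/-- A language is τ-independent if τ(L) ∩ L = ∅. -/
def indep {α : Type*} (τ : List α → List α → Prop) (L : Set (List α)) : Prop :=
  img τ L ∩ L = ∅

/-- τ is smooth (relative to M) if σ_X^∩(ind(X)) ⊆ σ_X^*(μ(X)) for every language X. -/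
def smooth {α : Type*} (τ : List α → List α → Prop) (M : Set (List α)) : Prop :=
  ∀ X : Set (List α), opInter (sig τ M X) (ind τ M X) ⊆ opStar (sig τ M X) (mu τ M X)

/-- L is P_τ-maximal relative to M: L ⊆ M, L is τ-independent, and no word of M \ L
can be added to L keeping τ-independence. -/
def maximalIndep {α : Type*} (τ : List α → List α → Prop) (M L : Set (List α)) : Prop :=
  L ⊆ M ∧ indep τ L ∧ ∀ w ∈ M \ L, ¬ indep τ (L ∪ {w})


lemma pre_mono {α : Type*} (τ : List α → List α → Prop) {A B : Set (List α)}
    (h : A ⊆ B) : pre τ A ⊆ pre τ B := by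
  rintro w ⟨x, hx, hxw⟩; exact ⟨x, h hx, hxw⟩

lemma sig_union {α : Type*} (τ : List α → List α → Prop) (M X A B : Set (List α)) :
    sig τ M X (A ∪ B) = sig τ M X A ∪ sig τ M X B := by
  ext w
  simp only [sig, pre, Set.mem_union, Set.mem_inter_iff, Set.mem_setOf_eq]
  constructor
  · rintro ⟨⟨x, hx | hx, hxw⟩, hI⟩
    · exact Or.inl ⟨⟨x, hx, hxw⟩, hI⟩
    · exact Or.inr ⟨⟨x, hx, hxw⟩, hI⟩
  · rintro (⟨⟨x, hx, hxw⟩, hI⟩ | ⟨⟨x, hx, hxw⟩, hI⟩)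
    · exact ⟨⟨x, Or.inl hx, hxw⟩, hI⟩
    · exact ⟨⟨x, Or.inr hx, hxw⟩, hI⟩

lemma sig_iter_union {α : Type*} (τ : List α → List α → Prop) (M X : Set (List α))
    (i : ℕ) (A B : Set (List α)) :
    (sig τ M X)^[i] (A ∪ B) = (sig τ M X)^[i] A ∪ (sig τ M X)^[i] B := by
  induction i generalizing A B with
  | zero => simp
  | succ n ih =>
    rw [Function.iterate_succ_apply, Function.iterate_succ_apply,
      Function.iterate_succ_apply, sig_union, ih]

lemma ind_eq_mu_union {α : Type*} (τ : List α → List α → Prop) (M X : Set (List α)) :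
    ind τ M X = mu τ M X ∪ sig τ M X (ind τ M X) := by
  ext w
  simp only [mu, sig, Set.mem_union, Set.mem_inter_iff, Set.mem_diff]
  tauto

lemma sig_iter_mu_subset_ind {α : Type*} (τ : List α → List α → Prop) (M X : Set (List α))
    (i : ℕ) : (sig τ M X)^[i] (mu τ M X) ⊆ ind τ M X := by
  cases i with
  | zero => exact fun w hw => hw.1
  | succ n => rw [Function.iterate_succ_apply']; exact fun w hw => hw.2

theorem stmt9 {α : Type*} (τ : List α → List α → Prop) (M : Set (List α))
    (hsm : smooth τ M) (X : Set (List α)) :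
    ind τ M X = opStar (sig τ M X) (mu τ M X) ∧
    mu τ M X ∩ opPlus (sig τ M X) (mu τ M X) = ∅ := by
  set I := ind τ M X with hI
  set m := mu τ M X with hm
  set σ := sig τ M X with hσ
  have hstar : I = opStar σ m := by
    apply Set.Subset.antisymm
    · intro w hw
      by_contra hns
      have hall : ∀ i, w ∈ σ^[i] I := by
        intro i
        induction i with
        | zero => exact hw
        | succ n ih =>
          have h2 := ih
          rw [show I = m ∪ σ I from ind_eq_mu_union τ M X,
            sig_iter_union τ M X n m (σ I)] at h2
          rcases h2 with h | h
          · exact absurd (Set.mem_iUnion.mpr ⟨n, h⟩) hns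
          · rwa [← Function.iterate_succ_apply] at h
      exact hns (hsm X (Set.mem_iInter₂.mpr fun i _ => hall i))
    · intro w hw
      rcases Set.mem_iUnion.mp hw with ⟨i, hi⟩
      exact sig_iter_mu_subset_ind τ M X i hi
  refine ⟨hstar, ?_⟩
  ext w
  simp only [Set.mem_inter_iff, Set.mem_empty_iff_false, iff_false, not_and]
  intro hwm hwp
  rcases Set.mem_iUnion₂.mp hwp with ⟨i, hi1, hi⟩
  obtain ⟨n, rfl⟩ := Nat.exists_eq_add_of_le hi1
  rw [add_comm, Function.iterate_succ_apply'] at hi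
  have : w ∈ pre τ I :=
    pre_mono τ (sig_iter_mu_subset_ind τ M X n) hi.1
  exact hwm.2 this
end

section
/- Let τ be an input-altering and smooth binary relation on words over an alphabet Σ, fix a language M, and let L ⊆ M be a τ-independent language. If there exists i ≥ 0 such that μ^{i+1}(L) = μ^i(L), then μ^i(L) is P_τ-maximal relative to M and contains L. -/
open Set

section Aux
variable {α : Type*} {τ : List α → List α → Prop} {M : Set (List α)}

lemma mem_ind_iff {X w} : w ∈ ind τ M X ↔ w ∈ M ∧ w ∉ img τ X ∧ w ∉ pre τ X := by
  simp [ind, Set.mem_diff, not_or, and_assoc]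

lemma indep_subset_mu {X : Set (List α)} (hXM : X ⊆ M) (hX : indep τ X) :
    X ⊆ mu τ M X := by
  have hni : ∀ w, ¬ (w ∈ img τ X ∧ w ∈ X) := by
    intro w hw
    exact Set.eq_empty_iff_forall_notMem.mp hX w hw
  intro x hx
  refine ⟨mem_ind_iff.mpr ⟨hXM hx, ?_, ?_⟩, ?_⟩
  · exact fun h => hni x ⟨h, hx⟩
  · rintro ⟨y, hy, hτ⟩
    exact hni y ⟨⟨x, hx, hτ⟩, hy⟩
  · rintro ⟨y, hy, hτ⟩
    exact (mem_ind_iff.mp hy).2.1 ⟨x, hx, hτ⟩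

lemma indep_mu (X : Set (List α)) : indep τ (mu τ M X) := by
  rw [indep, Set.eq_empty_iff_forall_notMem]
  rintro w ⟨⟨x, hx, hτ⟩, hw⟩
  exact hx.2 ⟨w, hw.1, hτ⟩

lemma ind_subset_of_fixed {K : Set (List α)} (hsm : smooth τ M)
    (hK : mu τ M K = K) : ind τ M K ⊆ K := by
  set Φ := sig τ M K with hΦ
  -- every iterate lands inside ind K
  have hAind : ∀ j, Φ^[j] (ind τ M K) ⊆ ind τ M K := by
    intro j
    cases j with
    | zero => exact fun x hx => hx
    | succ n =>
      rw [Function.iterate_succ_apply']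
      exact fun x hx => hx.2
  -- elements of K avoid pre τ (ind K)
  have hKpre : ∀ x ∈ K, x ∉ pre τ (ind τ M K) := by
    intro x hx
    rw [← hK] at hx
    exact hx.2
  -- σ^*(μ K) ⊆ K
  have hstar : opStar Φ (mu τ M K) ⊆ K := by
    have hiter : ∀ j, Φ^[j+1] K = ∅ := by
      intro j
      induction j with
      | zero =>
        rw [Function.iterate_one]
        rw [Set.eq_empty_iff_forall_notMem]
        rintro x ⟨⟨y, hy, hτ⟩, hxind⟩
        exact (mem_ind_iff.mp hxind).2.2 ⟨y, hy, hτ⟩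
      | succ n ih =>
        rw [Function.iterate_succ_apply', ih]
        rw [Set.eq_empty_iff_forall_notMem]
        rintro x ⟨⟨y, hy, -⟩, -⟩
        exact hy
    intro x hx
    rw [opStar, Set.mem_iUnion] at hx
    obtain ⟨j, hj⟩ := hx
    rw [hK] at hj
    cases j with
    | zero => exact hj
    | succ n => rw [hiter n] at hj; exact hj.elim
  -- smoothness kills the infinite intersection: each x ∈ ind K leaves at some stage
  have hleave : ∀ x ∈ ind τ M K, ∃ j, x ∉ Φ^[j+1] (ind τ M K) := by
    intro x hx
    by_contra hcon
    push_neg at hcon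
    have hmem : x ∈ opInter Φ (ind τ M K) := by
      rw [opInter, Set.mem_iInter₂]
      intro j hj
      obtain ⟨m, rfl⟩ := Nat.exists_eq_add_of_le hj
      rw [Nat.add_comm]
      exact hcon m
    have hxK : x ∈ K := hstar (hsm K hmem)
    have hx1 : x ∈ Φ^[1] (ind τ M K) := hcon 0
    rw [Function.iterate_one] at hx1
    exact hKpre x hxK hx1.1
  -- main induction
  have main : ∀ j, ∀ x ∈ ind τ M K, x ∉ Φ^[j+1] (ind τ M K) → x ∈ K := by
    intro j
    induction j with
    | zero =>
      intro x hx hx1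
      rw [Function.iterate_one] at hx1
      rw [← hK]
      refine ⟨hx, ?_⟩
      intro hpre
      exact hx1 ⟨hpre, hx⟩
    | succ n ih =>
      intro x hx hx2
      by_cases hx1 : x ∈ Φ^[n+1] (ind τ M K)
      · -- extract witness y ∈ Φ^[n] with τ x y
        rw [Function.iterate_succ_apply'] at hx1
        obtain ⟨⟨y, hy, hτ⟩, -⟩ := hx1
        have hynot : y ∉ Φ^[n+1] (ind τ M K) := by
          intro hy1
          apply hx2
          rw [Function.iterate_succ_apply']
          exact ⟨⟨y, hy1, hτ⟩, hx⟩
        have hyK : y ∈ K := ih y (hAind n hy) hynot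
        exact absurd ⟨y, hyK, hτ⟩ (mem_ind_iff.mp hx).2.2
      · exact ih x hx hx1
  intro x hx
  obtain ⟨j, hj⟩ := hleave x hx
  exact main j x hx hj

end Aux

theorem stmt14 {α : Type*} (τ : List α → List α → Prop) (M L : Set (List α))
    (halt : ∀ w : List α, ¬ τ w w) (hsm : smooth τ M)
    (hLM : L ⊆ M) (hL : indep τ L)
    (i : ℕ) (hfix : (mu τ M)^[i+1] L = (mu τ M)^[i] L) :
    maximalIndep τ M ((mu τ M)^[i] L) ∧ L ⊆ (mu τ M)^[i] L := by
  -- basic invariants along the iteration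
  have hinv : ∀ j, indep τ ((mu τ M)^[j] L) ∧ (mu τ M)^[j] L ⊆ M ∧ L ⊆ (mu τ M)^[j] L := by
    intro j
    induction j with
    | zero => exact ⟨hL, hLM, fun x hx => hx⟩
    | succ n ih =>
      obtain ⟨hind, hsub, hLsub⟩ := ih
      rw [Function.iterate_succ_apply']
      refine ⟨indep_mu _, fun x hx => hx.1.1, ?_⟩
      exact hLsub.trans (indep_subset_mu hsub hind)
  obtain ⟨hKind, hKM, hLK⟩ := hinv i
  set K := (mu τ M)^[i] L with hKdef
  have hK : mu τ M K = K := by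
    rw [← Function.iterate_succ_apply' (mu τ M) i L]
    exact hfix
  have hindK : ind τ M K ⊆ K := ind_subset_of_fixed hsm hK
  refine ⟨⟨hKM, hKind, ?_⟩, hLK⟩
  rintro w ⟨hwM, hwK⟩ hindep
  have hni : ∀ z, ¬ (z ∈ img τ (K ∪ {w}) ∧ z ∈ K ∪ {w}) := by
    intro z hz
    exact Set.eq_empty_iff_forall_notMem.mp hindep z hz
  apply hwK
  apply hindK
  refine mem_ind_iff.mpr ⟨hwM, ?_, ?_⟩
  · rintro ⟨y, hy, hτ⟩
    exact hni w ⟨⟨y, Or.inl hy, hτ⟩, Or.inr rfl⟩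
  · rintro ⟨y, hy, hτ⟩
    exact hni y ⟨⟨w, Or.inr rfl, hτ⟩, Or.inl hy⟩
end
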